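/- Let K ≥ 1, let U be a set, and let ℓ : U × {e_1,…,e_K} → ℝ be symmetric with constant C₀. Let X be a set, let (x_1,y_1),…,(x_n,y_n) ∈ X × {e_1,…,e_K} be given samples, and let 0 < η ≤ 1/K. Let F be a set of functions from X to U, and define L_n(f) = (1/n) ∑_{i=1}^n ℓ(f(x_i), y_i) and L^η_n(f) = (1/n) ∑_{i=1}^n [ (1 − (K−1)η) ℓ(f(x_i), y_i) + η ∑_{j : e_j ≠ y_i} ℓ(f(x_i), e_j) ]. If f̂ ∈ F satisfies L_n(f̂) ≤ L_n(f) for all f ∈ F, then L^η_n(f̂) ≤ L^η_n(f) for all f ∈ F; that is, the symmetric loss is noise-tolerant: every empirical risk minimizer for the clean labels is an empirical risk minimizer for the uniform-noise-averaged risk. -/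

import Mathlib

open scoped BigOperators

/-- A symmetric loss is noise-tolerant: if `ℓ` is symmetric with constant `C₀`
(`∑_{j=1}^K ℓ(u, e_j) = C₀` for all `u`, labels identified with indices `j ∈ Fin K`)
and `0 < η ≤ 1/K`, then every minimizer of the clean empirical risk
`L_n(f) = (1/n) ∑_i ℓ(f(x_i), y_i)` over a class `F` also minimizes the
noise-averaged empirical risk
`L^η_n(f) = (1/n) ∑_i [(1 − (K−1)η) ℓ(f(x_i), y_i) + η ∑_{j ≠ y_i} ℓ(f(x_i), e_j)]`
over `F`. -/
theorem symmetric_loss_noise_tolerant (K n : ℕ) (hK : 1 ≤ K) (hn : 1 ≤ n)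
    {X U : Type*} (ℓ : U → Fin K → ℝ) (C₀ : ℝ)
    (hsym : ∀ u : U, ∑ j, ℓ u j = C₀)
    (x : Fin n → X) (y : Fin n → Fin K) (η : ℝ)
    (hη : 0 < η) (hηK : η ≤ 1 / K)
    (F : Set (X → U)) (fhat : X → U) (hfhatF : fhat ∈ F)
    (hERM : ∀ f ∈ F, (1 / n : ℝ) * ∑ i, ℓ (fhat (x i)) (y i)
        ≤ (1 / n : ℝ) * ∑ i, ℓ (f (x i)) (y i)) :
    ∀ f ∈ F,
      (1 / n : ℝ) * ∑ i, ((1 - ((K : ℝ) - 1) * η) * ℓ (fhat (x i)) (y i)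
          + η * ∑ j ∈ Finset.univ.filter (fun j => j ≠ y i), ℓ (fhat (x i)) j)
        ≤ (1 / n : ℝ) * ∑ i, ((1 - ((K : ℝ) - 1) * η) * ℓ (f (x i)) (y i)
          + η * ∑ j ∈ Finset.univ.filter (fun j => j ≠ y i), ℓ (f (x i)) j) := by
  intro f hf
  have key : ∀ (g : X → U),
      (∑ i, ((1 - ((K : ℝ) - 1) * η) * ℓ (g (x i)) (y i)
          + η * ∑ j ∈ Finset.univ.filter (fun j => j ≠ y i), ℓ (g (x i)) j))
      = (1 - K * η) * (∑ i, ℓ (g (x i)) (y i)) + n * (η * C₀) := by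
    intro g
    have h1 : ∀ i : Fin n,
        ∑ j ∈ Finset.univ.filter (fun j => j ≠ y i), ℓ (g (x i)) j
          = C₀ - ℓ (g (x i)) (y i) := by
      intro i
      rw [Finset.filter_ne', Finset.sum_erase_eq_sub (Finset.mem_univ _), hsym]
    calc (∑ i, ((1 - ((K : ℝ) - 1) * η) * ℓ (g (x i)) (y i)
          + η * ∑ j ∈ Finset.univ.filter (fun j => j ≠ y i), ℓ (g (x i)) j))
        = ∑ i, ((1 - (K : ℝ) * η) * ℓ (g (x i)) (y i) + η * C₀) := by
          refine Finset.sum_congr rfl fun i _ => ?_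
          rw [h1 i]; ring
      _ = (1 - K * η) * (∑ i, ℓ (g (x i)) (y i)) + n * (η * C₀) := by
          rw [Finset.sum_add_distrib, ← Finset.mul_sum, Finset.sum_const,
            Finset.card_univ, Fintype.card_fin, nsmul_eq_mul]
  rw [key fhat, key f]
  have hcoef : (0 : ℝ) ≤ 1 - K * η := by
    have hKpos : (0 : ℝ) < K := by exact_mod_cast hK
    have : (K : ℝ) * η ≤ 1 := by
      rw [div_eq_mul_inv, one_mul] at hηK
      calc (K : ℝ) * η ≤ K * (K : ℝ)⁻¹ := by
            exact mul_le_mul_of_nonneg_left hηK hKpos.le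
        _ = 1 := mul_inv_cancel₀ hKpos.ne'
    linarith
  have hERM' := hERM f hf
  have hnpos : (0 : ℝ) < n := by exact_mod_cast hn
  have hsum : (∑ i, ℓ (fhat (x i)) (y i)) ≤ ∑ i, ℓ (f (x i)) (y i) := by
    have := mul_le_mul_of_nonneg_left hERM' hnpos.le
    rw [← mul_assoc, ← mul_assoc, mul_one_div_cancel hnpos.ne', one_mul, one_mul] at this
    exact this
  have := mul_le_mul_of_nonneg_left hsum hcoef
  have h2 := mul_le_mul_of_nonneg_left (add_le_add_left this ((n : ℝ) * (η * C₀)))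
    (le_of_lt (by positivity : (0:ℝ) < 1 / n))
  exact h2
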